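/- Let f : A → A be a continuous map of degree d with |d| > 1. If every lift F : Ã → Ã of f has a fixed point, then f has exactly |d − 1| Nielsen classes of fixed points. -/

import Mathlib

open Set Filter Topology

noncomputable section

/-- The open annulus `A = S¹ × (0,1)`. -/
abbrev Ann : Type := Circle × (Set.Ioo (0:ℝ) 1)

/-- The universal cover `Ã = ℝ × (0,1)`. -/
abbrev AnnTil : Type := ℝ × (Set.Ioo (0:ℝ) 1)

/-- The covering projection `π(x,y) = (exp(2πix), y)`. -/
def pr : AnnTil → Ann := fun z => (Circle.exp (2 * Real.pi * z.1), z.2)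

/-- Translation by an integer in the first coordinate: `z + k`. -/
def tr (z : AnnTil) (k : ℤ) : AnnTil := (z.1 + k, z.2)

/-- `F` is a lift of `f`. -/
def IsLift (f : Ann → Ann) (F : AnnTil → AnnTil) : Prop :=
  Continuous F ∧ pr ∘ F = f ∘ pr

/-- `f` has degree `d`: some lift satisfies `F(z+1) = F(z) + d`. -/
def HasDegree (f : Ann → Ann) (d : ℤ) : Prop :=
  ∃ F : AnnTil → AnnTil, IsLift f F ∧ ∀ z, F (tr z 1) = tr (F z) d

/-- A subset of the annulus is essential if it is not contained in any
connected, simply connected open subset. -/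
def IsEssential (K : Set Ann) : Prop :=
  ¬ ∃ U : Set Ann, IsOpen U ∧ IsConnected U ∧ SimplyConnectedSpace U ∧ K ⊆ U

/-- Nielsen equivalence of fixed points `p`, `q` of `g`: there is a path `γ`
from `p` to `q` homotopic (rel endpoints) to `g ∘ γ`. -/
def NielsenEquiv (g : Ann → Ann) (p q : Ann) : Prop :=
  ∃ (hg : Continuous g) (hp : g p = p) (hq : g q = q) (γ : Path p q),
    γ.Homotopic ((γ.map hg).cast hp.symm hq.symm)

/-- `g` has exactly `N` Nielsen classes of fixed points. -/
def HasExactlyNielsenClasses (g : Ann → Ann) (N : ℕ) : Prop :=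
  ∃ S : Finset Ann, S.card = N ∧ (∀ p ∈ S, g p = p) ∧
    (∀ p ∈ S, ∀ q ∈ S, p ≠ q → ¬ NielsenEquiv g p q) ∧
    (∀ p, g p = p → ∃ q ∈ S, NielsenEquiv g p q)

/-- `Fill K`: the union of `K` with the connected components of its
complement whose closure is compact. -/
def Fill (K : Set Ann) : Set Ann :=
  K ∪ {x | x ∈ Kᶜ ∧ IsCompact (closure (connectedComponentIn Kᶜ x))}


section Helpers
open unitInterval

noncomputable def ee (x : ℝ) : Circle := Circle.exp (2 * Real.pi * x)

lemma ee_cont : Continuous ee := Circle.exp.continuous.comp (continuous_const.mul continuous_id)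

lemma ee_add (x y : ℝ) : ee (x + y) = ee x * ee y := by
  rw [ee, ee, ee, mul_add, Circle.exp_add]

lemma ee_zero : ee 0 = 1 := by rw [ee, mul_zero, Circle.exp_zero]

lemma ee_eq_ee {x y : ℝ} : ee x = ee y ↔ ∃ m : ℤ, x = y + m := by
  rw [ee, ee, Circle.exp_eq_exp]
  constructor
  · rintro ⟨m, hm⟩
    refine ⟨m, mul_left_cancel₀ (a := 2 * Real.pi) (by positivity) ?_⟩
    rw [hm]; ring
  · rintro ⟨m, hm⟩
    exact ⟨m, by rw [hm]; ring⟩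

noncomputable def alift (c : Circle) : ℝ := Complex.arg c / (2 * Real.pi)

lemma ee_alift (c : Circle) : ee (alift c) = c := by
  rw [ee, alift]
  have : 2 * Real.pi * (Complex.arg ↑c / (2 * Real.pi)) = Complex.arg c := by
    have := Real.pi_ne_zero; field_simp
  rw [this, Circle.exp_arg]

lemma alift_one : alift 1 = 0 := by
  simp [alift, Complex.arg_one]

lemma alift_contAt {c : Circle} (h : (c : ℂ) ≠ -1) : ContinuousAt alift c := by
  have harg : ContinuousAt Complex.arg (c : ℂ) := by
    apply Complex.continuousAt_arg
    by_contra hcon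
    rw [Complex.mem_slitPlane_iff] at hcon
    push_neg at hcon
    obtain ⟨h1, h2⟩ := hcon
    have habs : ‖(c : ℂ)‖ = 1 := Circle.norm_coe c
    apply h
    have hre : (c : ℂ).re = -1 := by
      rw [Complex.norm_def, Complex.normSq_apply, h2] at habs
      have : (c:ℂ).re ^ 2 = 1 := by
        nlinarith [Real.sq_sqrt (by nlinarith : (0:ℝ) ≤ (c:ℂ).re * (c:ℂ).re + 0 * 0)]
      nlinarith
    exact Complex.ext (by simp [hre]) (by simp [h2])
  exact ((harg.comp continuous_subtype_val.continuousAt).div_const _)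

lemma circle_ne_neg_one_of_dist {c c' : Circle} (h : dist c c' < 2) :
    ((c' / c : Circle) : ℂ) ≠ -1 := by
  intro hcon
  have hc : (c' : ℂ) = -(c : ℂ) := by
    have hdiv : (c' : ℂ) / (c : ℂ) = -1 := by rw [← Circle.coe_div, hcon]
    have hc0 : (c : ℂ) ≠ 0 := Circle.coe_ne_zero c
    field_simp at hdiv
    simpa using hdiv
  rw [show dist c c' = dist (c:ℂ) (c':ℂ) from rfl, Complex.dist_eq, hc] at h
  have : ‖(c:ℂ) - -(c:ℂ)‖ = 2 := by
    have : (c:ℂ) - -(c:ℂ) = 2 * c := by ring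
    rw [this, norm_mul, Circle.norm_coe]
    simp
  linarith

lemma min_lip (a b c : ℝ) (h : b ≤ c) : |min a c - min a b| ≤ c - b := by
  rcases le_total a b with h1 | h1
  · rw [min_eq_left h1, min_eq_left (h1.trans h)]; simpa using h
  · rw [min_eq_right h1]
    rcases le_total a c with h2 | h2
    · rw [min_eq_left h2, abs_le]; constructor <;> linarith
    · rw [min_eq_right h2, abs_le]; constructor <;> linarith

lemma ee_sum {ι : Type*} (s : Finset ι) (f : ι → ℝ) :
    ee (∑ i ∈ s, f i) = ∏ i ∈ s, ee (f i) := by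
  classical
  induction s using Finset.induction_on with
  | empty => simpa using ee_zero
  | insert a s h ih => rw [Finset.sum_insert h, Finset.prod_insert h, ee_add, ih]

lemma lift_exists {Y : Type} [MetricSpace Y] [CompactSpace Y]
    (u : Y × I → Circle) (hu : Continuous u) (L0 : Y → ℝ) (hL0 : Continuous L0)
    (h0 : ∀ y, ee (L0 y) = u (y, 0)) :
    ∃ K : Y × I → ℝ, Continuous K ∧ (∀ y, K (y, 0) = L0 y) ∧ ∀ z, ee (K z) = u z := by
  obtain ⟨δ, hδ, hδ2⟩ := Metric.uniformContinuous_iff.mp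
    (CompactSpace.uniformContinuous_of_continuous hu) 2 (by norm_num)
  obtain ⟨n, hn⟩ := exists_nat_one_div_lt hδ
  set N := n + 1 with hNdef
  have hNpos : (0:ℝ) < N := by positivity
  have hmem : ∀ (t : I) (i : ℕ), min (t:ℝ) (i / N) ∈ Set.Icc (0:ℝ) 1 :=
    fun t i => ⟨le_min t.2.1 (by positivity), (min_le_left _ _).trans t.2.2⟩
  set g : I → ℕ → I := fun t i => ⟨min (t:ℝ) (i / N), hmem t i⟩ with hg
  have hg0 : ∀ (t : I), g t 0 = 0 := fun t => Subtype.ext (by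
    simp only [hg, Nat.cast_zero, zero_div]
    rw [min_eq_right t.2.1]; rfl)
  have hgN : ∀ t, g t N = t := fun t => Subtype.ext (by
    simp only [hg]
    rw [div_self (ne_of_gt hNpos)]
    exact min_eq_left t.2.2)
  have hg0' : ∀ i, g 0 i = 0 := fun i => Subtype.ext (by
    simp only [hg]
    rw [min_eq_left (by positivity)])
  have hgcont : ∀ i, Continuous fun t : I => g t i := fun i =>
    Continuous.subtype_mk (continuous_subtype_val.min continuous_const) _
  set v : ℕ → Y × I → Circle := fun i z => u (z.1, g z.2 i) with hv
  have hvcont : ∀ i, Continuous (v i) := fun i =>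
    hu.comp (continuous_fst.prodMk ((hgcont i).comp continuous_snd))
  have hsmall : ∀ (i : ℕ) (z : Y × I), ((v (i+1) z / v i z : Circle) : ℂ) ≠ -1 := by
    intro i z
    apply circle_ne_neg_one_of_dist
    apply hδ2
    rw [Prod.dist_eq]
    have h1 : dist (g z.2 (i+1)) (g z.2 i) ≤ 1 / N := by
      rw [Subtype.dist_eq, Real.dist_eq]
      have hbc : (i:ℝ) / N ≤ ((i:ℕ)+1 : ℝ) / N := by gcongr; linarith
      have := min_lip (z.2 : ℝ) ((i:ℝ) / N) (((i:ℝ)+1) / N) hbc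
      have heq : ((i:ℝ)+1) / N - (i:ℝ) / N = 1 / N := by ring
      calc |(g z.2 (i+1) : ℝ) - (g z.2 i : ℝ)|
          = |min (z.2:ℝ) (((i:ℝ)+1)/N) - min (z.2:ℝ) ((i:ℝ)/N)| := by
            simp only [hg]
            push_cast
            ring_nf
        _ ≤ 1 / N := by rw [← heq]; exact this
    have : dist (g z.2 (i+1)) (g z.2 i) < δ := lt_of_le_of_lt h1 (by
      calc (1:ℝ)/N = 1/(n+1) := by norm_num [hNdef]
        _ < δ := hn)
    simp only [dist_self]
    exact max_lt hδ (by rwa [dist_comm])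
  set D : ℕ → Y × I → ℝ := fun i z => alift (v (i+1) z / v i z) with hD
  have hDcont : ∀ i, Continuous (D i) := by
    intro i
    rw [continuous_iff_continuousAt]
    intro z
    have h1 : ContinuousAt (fun w => v (i+1) w / v i w) z :=
      ((hvcont (i+1)).div' (hvcont i)).continuousAt
    exact ContinuousAt.comp (f := fun w => v (i+1) w / v i w) (alift_contAt (hsmall i z)) h1
  refine ⟨fun z => L0 z.1 + ∑ i ∈ Finset.range N, D i z, ?_, ?_, ?_⟩
  · exact (hL0.comp continuous_fst).add (continuous_finset_sum _ fun i _ => hDcont i)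
  · intro y
    have : ∀ i, D i (y, (0:I)) = 0 := by
      intro i
      simp only [hD, hv, hg0']
      rw [div_self', alift_one]
    simp [this]
  · rintro ⟨y, t⟩
    rw [ee_add, ee_sum, h0]
    have : ∀ i ∈ Finset.range N, ee (D i (y, t)) = v (i+1) (y,t) / v i (y,t) :=
      fun i _ => ee_alift _
    rw [Finset.prod_congr rfl this, Finset.prod_range_div (fun i => v i (y,t))]
    simp only [hv, hg0, hgN]
    rw [mul_div_assoc', mul_div_cancel_left]

lemma path_lift (c : I → Circle) (hc : Continuous c) (a0 : ℝ) (h : ee a0 = c 0) :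
    ∃ L : I → ℝ, Continuous L ∧ L 0 = a0 ∧ ∀ t, ee (L t) = c t := by
  obtain ⟨K, hK, hK0, hKe⟩ := lift_exists (Y := I) (fun z => c z.2) (hc.comp continuous_snd)
    (fun _ => a0) continuous_const (fun y => h)
  exact ⟨fun t => K (0, t), hK.comp (continuous_const.prodMk continuous_id),
    hK0 0, fun t => hKe (0, t)⟩

lemma lift_unique {Y : Type} [TopologicalSpace Y] [PreconnectedSpace Y]
    (L1 L2 : Y → ℝ) (h1 : Continuous L1) (h2 : Continuous L2)
    (he : ∀ y, ee (L1 y) = ee (L2 y)) (y0 : Y) (h0 : L1 y0 = L2 y0) : ∀ y, L1 y = L2 y := by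
  have hint : ∀ y, ∃ m : ℤ, L1 y - L2 y = m := by
    intro y
    obtain ⟨m, hm⟩ := ee_eq_ee.mp (he y)
    exact ⟨m, by linarith⟩
  have hgc : Continuous (fun y => L1 y - L2 y) := h1.sub h2
  have hrange : OrdConnected (range (fun y => L1 y - L2 y)) :=
    (isPreconnected_range hgc).ordConnected
  intro y
  by_contra hne
  obtain ⟨m, hm⟩ := hint y
  have hm0 : m ≠ 0 := by
    intro h
    rw [h] at hm
    push_cast at hm
    exact hne (by linarith)
  have h0' : (0:ℝ) ∈ range (fun y => L1 y - L2 y) := ⟨y0, by simp [h0]⟩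
  have hm' : ((m:ℝ)) ∈ range (fun y => L1 y - L2 y) := ⟨y, hm⟩
  have halfmem : ∃ y', L1 y' - L2 y' = 1/2 ∨ L1 y' - L2 y' = -(1/2) := by
    rcases hm0.lt_or_gt with hlt | hlt
    · have hm1 : (m:ℝ) ≤ -1 := by
        have h' : (m:ℝ) ≤ ((-1:ℤ):ℝ) := Int.cast_le.mpr (by omega)
        simpa using h'
      have : (-(1/2) : ℝ) ∈ range (fun y => L1 y - L2 y) :=
        hrange.out hm' h0' ⟨by linarith, by norm_num⟩
      obtain ⟨y', hy'⟩ := this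
      exact ⟨y', Or.inr hy'⟩
    · have hm1 : (1:ℝ) ≤ (m:ℝ) := by
        have h' : ((1:ℤ):ℝ) ≤ (m:ℝ) := Int.cast_le.mpr (by omega)
        simpa using h'
      have : ((1/2) : ℝ) ∈ range (fun y => L1 y - L2 y) :=
        hrange.out h0' hm' ⟨by norm_num, by linarith⟩
      obtain ⟨y', hy'⟩ := this
      exact ⟨y', Or.inl hy'⟩
  obtain ⟨y', hy'⟩ := halfmem
  obtain ⟨c, hc⟩ := hint y'
  rcases hy' with hy' | hy' <;> rw [hy'] at hc
  · have : (2*c : ℤ) = 1 := by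
      have : (2*(c:ℝ)) = 1 := by linarith
      exact_mod_cast this
    omega
  · have : (2*c : ℤ) = -1 := by
      have : (2*(c:ℝ)) = -1 := by linarith
      exact_mod_cast this
    omega


lemma pr_def (z : AnnTil) : pr z = (ee z.1, z.2) := rfl

lemma pr_cont : Continuous pr :=
  (ee_cont.comp continuous_fst).prodMk continuous_snd

lemma tr_tr (z : AnnTil) (a b : ℤ) : tr (tr z a) b = tr z (a + b) := by
  refine Prod.ext_iff.mpr ⟨?_, rfl⟩
  show z.1 + (a:ℝ) + (b:ℝ) = z.1 + ((a + b : ℤ):ℝ)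
  push_cast; ring

lemma tr_zero (z : AnnTil) : tr z 0 = z := by simp [tr]

lemma tr_shift {a b : AnnTil} {k : ℤ} (h : tr a k = b) : a = tr b (-k) := by
  rw [← h, tr_tr]
  simp [tr_zero]

lemma tr_index_inj {z : AnnTil} {a b : ℤ} (h : tr z a = tr z b) : a = b := by
  have h1 : z.1 + (a:ℝ) = z.1 + (b:ℝ) := congrArg Prod.fst h
  have : (a:ℝ) = b := by linarith
  exact_mod_cast this

lemma pr_tr (z : AnnTil) (k : ℤ) : pr (tr z k) = pr z := by
  rw [pr_def, pr_def]
  exact Prod.ext_iff.mpr ⟨ee_eq_ee.mpr ⟨k, rfl⟩, rfl⟩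

lemma pr_eq_iff {a b : AnnTil} : pr a = pr b ↔ ∃ m : ℤ, a = tr b m := by
  constructor
  · intro h
    rw [pr_def, pr_def, Prod.ext_iff] at h
    obtain ⟨h1, h2⟩ := h
    obtain ⟨m, hm⟩ := ee_eq_ee.mp h1
    exact ⟨m, Prod.ext_iff.mpr ⟨hm, h2⟩⟩
  · rintro ⟨m, rfl⟩
    exact pr_tr b m

lemma Ioo_comb {a b : ℝ} (ha : a ∈ Set.Ioo (0:ℝ) 1) (hb : b ∈ Set.Ioo (0:ℝ) 1) (s : ℝ)
    (hs0 : 0 ≤ s) (hs1 : s ≤ 1) : (1 - s) * a + s * b ∈ Set.Ioo (0:ℝ) 1 := by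
  constructor
  · rcases lt_or_ge s 1 with h | h
    · nlinarith [mul_pos (by linarith : (0:ℝ) < 1 - s) ha.1, mul_nonneg hs0 hb.1.le]
    · have hs : s = 1 := le_antisymm hs1 h
      rw [hs]; simpa using hb.1
  · rcases lt_or_ge s 1 with h | h
    · nlinarith [mul_lt_mul_of_pos_left ha.2 (by linarith : (0:ℝ) < 1 - s),
        mul_le_mul_of_nonneg_left hb.2.le hs0]
    · have hs : s = 1 := le_antisymm hs1 h
      rw [hs]; simpa using hb.2

open unitInterval in
noncomputable def mix (s : I) (a b : AnnTil) : AnnTil :=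
  ((1 - (s:ℝ)) * a.1 + s * b.1,
   ⟨(1 - (s:ℝ)) * (a.2:ℝ) + s * (b.2:ℝ), Ioo_comb a.2.2 b.2.2 s s.2.1 s.2.2⟩)

open unitInterval in
lemma mix_cont : Continuous fun p : I × AnnTil × AnnTil => mix p.1 p.2.1 p.2.2 := by
  unfold mix
  have hs : Continuous fun p : I × AnnTil × AnnTil => (p.1 : ℝ) :=
    continuous_subtype_val.comp continuous_fst
  have ha1 : Continuous fun p : I × AnnTil × AnnTil => p.2.1.1 :=
    continuous_fst.comp (continuous_fst.comp continuous_snd)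
  have hb1 : Continuous fun p : I × AnnTil × AnnTil => p.2.2.1 :=
    continuous_fst.comp (continuous_snd.comp continuous_snd)
  have ha2 : Continuous fun p : I × AnnTil × AnnTil => (p.2.1.2 : ℝ) :=
    continuous_subtype_val.comp (continuous_snd.comp (continuous_fst.comp continuous_snd))
  have hb2 : Continuous fun p : I × AnnTil × AnnTil => (p.2.2.2 : ℝ) :=
    continuous_subtype_val.comp (continuous_snd.comp (continuous_snd.comp continuous_snd))
  exact (((continuous_const.sub hs).mul ha1).add (hs.mul hb1)).prodMk
    (Continuous.subtype_mk (((continuous_const.sub hs).mul ha2).add (hs.mul hb2)) _)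

open unitInterval in
lemma mix_zero (a b : AnnTil) : mix 0 a b = a := by
  unfold mix
  have h0 : ((0 : I) : ℝ) = 0 := rfl
  refine Prod.ext_iff.mpr ⟨?_, Subtype.ext ?_⟩ <;> simp [h0]

open unitInterval in
lemma mix_one (a b : AnnTil) : mix 1 a b = b := by
  unfold mix
  have h1 : ((1 : I) : ℝ) = 1 := rfl
  refine Prod.ext_iff.mpr ⟨?_, Subtype.ext ?_⟩ <;> simp [h1]

open unitInterval in
lemma mix_self (s : I) (a : AnnTil) : mix s a a = a := by
  unfold mix
  refine Prod.ext_iff.mpr ⟨by ring, Subtype.ext (by simp; ring)⟩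

open unitInterval in
lemma nielsen_of_common_lift {f : Ann → Ann} (hf : Continuous f) {G : AnnTil → AnnTil}
    (hG : IsLift f G) {u v : AnnTil} (hu : G u = u) (hv : G v = v) :
    NielsenEquiv f (pr u) (pr v) := by
  obtain ⟨hGc, hGl⟩ := hG
  have hlift : ∀ z, pr (G z) = f (pr z) := fun z => congrFun hGl z
  set sg : I → AnnTil := fun t => mix t u v with hsgdef
  have hsg : Continuous sg := mix_cont.comp
    (continuous_id.prodMk (continuous_const.prodMk continuous_const))
  set γ : Path (pr u) (pr v) :=
    { toFun := fun t => pr (sg t)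
      continuous_toFun := pr_cont.comp hsg
      source' := by simp only [hsgdef, mix_zero]
      target' := by simp only [hsgdef, mix_one] } with hγdef
  have hp : f (pr u) = pr u := by rw [← hlift u, hu]
  have hq : f (pr v) = pr v := by rw [← hlift v, hv]
  refine ⟨hf, hp, hq, γ, ⟨?_⟩⟩
  refine
    { toFun := fun p => pr (mix p.1 (sg p.2) (G (sg p.2)))
      continuous_toFun := pr_cont.comp (mix_cont.comp
        (continuous_fst.prodMk ((hsg.comp continuous_snd).prodMk
          (hGc.comp (hsg.comp continuous_snd)))))
      map_zero_left := ?_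
      map_one_left := ?_
      prop' := ?_ }
  · intro t
    simp only [mix_zero]
    rfl
  · intro t
    simp only [mix_one]
    show pr (G (sg t)) = ((γ.map hf).cast hp.symm hq.symm) t
    rw [Path.cast_coe, Path.map_coe]
    exact hlift (sg t)
  · intro s t ht
    simp only [Set.mem_insert_iff, Set.mem_singleton_iff] at ht
    rcases ht with rfl | rfl
    · show pr (mix s (sg 0) (G (sg 0))) = γ 0
      have hsg0 : sg 0 = u := mix_zero u v
      rw [hsg0, hu, mix_self]
      exact γ.source.symm ▸ rfl
    · show pr (mix s (sg 1) (G (sg 1))) = γ 1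
      have hsg1 : sg 1 = v := mix_one u v
      rw [hsg1, hv, mix_self]
      exact γ.target.symm ▸ rfl

lemma F_iter {F : AnnTil → AnnTil} {d : ℤ}
    (hFd : ∀ z, F (tr z 1) = tr (F z) d) :
    ∀ (m : ℤ) (z : AnnTil), F (tr z m) = tr (F z) (m * d) := by
  intro m
  induction m using Int.induction_on with
  | zero => intro z; simp [tr_zero]
  | succ n ih =>
    intro z
    have h1 : tr z ((n:ℤ)+1) = tr (tr z n) 1 := by rw [tr_tr]
    rw [h1, hFd, ih, tr_tr]
    ring_nf
  | pred n ih =>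
    intro z
    have h1 : tr (tr z (-(n:ℤ)-1)) 1 = tr z (-(n:ℤ)) := by rw [tr_tr]; ring_nf
    have h2 := hFd (tr z (-(n:ℤ)-1))
    rw [h1, ih z] at h2
    have h3 := tr_shift h2.symm
    rw [h3, tr_tr]
    congr 1
    ring

open unitInterval in
lemma dvd_of_nielsen {f : Ann → Ann} (hf : Continuous f) {F : AnnTil → AnnTil}
    (hF : IsLift f F) {d : ℤ} (hFd : ∀ z, F (tr z 1) = tr (F z) d)
    (k j : ℤ) (u v : AnnTil) (hu : tr (F u) k = u) (hv : tr (F v) j = v)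
    (hne : NielsenEquiv f (pr u) (pr v)) : (d - 1) ∣ (j - k) := by
  obtain ⟨hg, hp, hq, γ, ⟨H⟩⟩ := hne
  obtain ⟨hFc, hFl⟩ := hF
  have hlift : ∀ z, pr (F z) = f (pr z) := fun z => congrFun hFl z
  have hγc : Continuous fun t => (γ t).1 := continuous_fst.comp γ.continuous
  have hee0 : ee u.1 = (γ 0).1 := by rw [γ.source]; rfl
  obtain ⟨L, hLc, hL0, hLe⟩ := path_lift _ hγc u.1 hee0
  set tilγ : I → AnnTil := fun t => (L t, (γ t).2) with htilγ
  have htilc : Continuous tilγ := hLc.prodMk (continuous_snd.comp γ.continuous)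
  have hprtil : ∀ t, pr (tilγ t) = γ t := fun t => Prod.ext_iff.mpr ⟨hLe t, rfl⟩
  have htil0 : tilγ 0 = u := by
    refine Prod.ext_iff.mpr ⟨hL0, ?_⟩
    show (γ 0).2 = u.2
    rw [γ.source]
    rfl
  obtain ⟨m, hm⟩ : ∃ m : ℤ, tilγ 1 = tr v m := by
    apply pr_eq_iff.mp
    rw [hprtil 1, γ.target]
  -- lift the homotopy
  set uH : I × I → Circle := fun p => (H (p.2, p.1)).1 with huH
  have huHc : Continuous uH :=
    continuous_fst.comp (H.continuous.comp (continuous_snd.prodMk continuous_fst))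
  have hbase : ∀ t : I, ee (L t) = uH (t, 0) := by
    intro t
    rw [hLe t]
    show (γ t).1 = (H ((0:I), t)).1
    rw [H.apply_zero]
    rfl
  obtain ⟨K, hKc, hK0, hKe⟩ := lift_exists uH huHc L hLc hbase
  -- left edge is constant
  have c0 : ∀ s : I, K (0, s) = u.1 := by
    have hc : Continuous fun s : I => K (0, s) :=
      hKc.comp (continuous_const.prodMk continuous_id)
    refine lift_unique (fun s : I => K (0, s)) (fun _ => u.1) hc continuous_const ?_ 0 ?_
    · intro s
      rw [hKe ((0:I), s)]
      show (H (s, 0)).1 = ee u.1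
      rw [H.source]
      rfl
    · exact (hK0 0).trans hL0
  -- right edge is constant
  have c1 : ∀ s : I, K (1, s) = L 1 := by
    have hc : Continuous fun s : I => K (1, s) :=
      hKc.comp (continuous_const.prodMk continuous_id)
    refine lift_unique (fun s : I => K (1, s)) (fun _ => L 1) hc continuous_const ?_ 0 ?_
    · intro s
      rw [hKe ((1:I), s)]
      show (H (s, 1)).1 = ee (L 1)
      rw [H.target, hLe 1, γ.target]
    · exact hK0 1
  -- top edge equals the F-image lift
  have ctop : ∀ t : I, K (t, 1) = (tr (F (tilγ t)) k).1 := by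
    have hc : Continuous fun t : I => K (t, 1) :=
      hKc.comp (continuous_id.prodMk continuous_const)
    have hc2 : Continuous fun t : I => (tr (F (tilγ t)) k).1 := by
      show Continuous fun t : I => (F (tilγ t)).1 + ((k:ℤ):ℝ)
      exact ((continuous_fst.comp (hFc.comp htilc)).add continuous_const)
    refine lift_unique (fun t : I => K (t, 1)) (fun t : I => (tr (F (tilγ t)) k).1)
      hc hc2 ?_ 0 ?_
    · intro t
      rw [hKe (t, (1:I))]
      show (H ((1:I), t)).1 = ee ((tr (F (tilγ t))) k).1
      rw [H.apply_one]
      have h1 : ee ((tr (F (tilγ t))) k).1 = (pr (tr (F (tilγ t)) k)).1 := rfl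
      rw [h1, pr_tr, hlift, hprtil]
      have hcc : (((γ.map hg).cast hp.symm hq.symm)) t = f (γ t) := by
        rw [Path.cast_coe, Path.map_coe]
        rfl
      exact congrArg Prod.fst hcc
    · show K (0, 1) = (tr (F (tilγ 0)) k).1
      rw [c0 1, htil0, hu]
  -- evaluate at t = 1
  have hfinal := ctop 1
  rw [c1 1] at hfinal
  have hL1 : L 1 = v.1 + (m:ℝ) := congrArg Prod.fst hm
  have hFv : (F v).1 = v.1 - (j:ℝ) := by
    have := congrArg Prod.fst hv
    show _ = _
    simp only [tr] at this
    linarith [this]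
  have hFtr : F (tilγ 1) = tr (F v) (m * d) := by rw [hm, F_iter hFd]
  have hfin2 : (tr (F (tilγ 1)) k).1 = v.1 - (j:ℝ) + ((m*d : ℤ):ℝ) + (k:ℝ) := by
    rw [hFtr, tr_tr]
    show (F v).1 + (((m*d + k : ℤ)):ℝ) = _
    rw [hFv]
    push_cast
    ring
  rw [hfin2] at hfinal
  have hint : ((m + j - m*d - k : ℤ) : ℝ) = 0 := by
    push_cast at hfinal hL1 ⊢
    linarith [hL1, hfinal]
  have hzero : m + j - m*d - k = 0 := by exact_mod_cast hint
  exact ⟨m, by linear_combination hzero⟩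

end Helpers

/-- If every lift of `f` has a fixed point, then `f` has exactly `|d-1|`
Nielsen classes of fixed points. -/
theorem stmt_8 (f : Ann → Ann) (hf : Continuous f) (d : ℤ)
    (hdeg : HasDegree f d) (hd : 1 < |d|)
    (hfix : ∀ F : AnnTil → AnnTil, IsLift f F → ∃ z : AnnTil, F z = z) :
    HasExactlyNielsenClasses f (d - 1).natAbs := by
  classical
  obtain ⟨F, hF, hFd⟩ := hdeg
  obtain ⟨hFc, hFl⟩ := hF
  have hlift : ∀ z, pr (F z) = f (pr z) := fun z => congrFun hFl z
  set N := (d - 1).natAbs with hNdef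
  have hdne : d - 1 ≠ 0 := by
    intro h
    rw [show d = 1 by omega] at hd
    norm_num at hd
  have hNpos : 0 < N := Int.natAbs_pos.mpr hdne
  have hNZ : (0:ℤ) < (N:ℤ) := by exact_mod_cast hNpos
  have hdvdN : ∀ x : ℤ, (d - 1) ∣ x ↔ ((N:ℤ) ∣ x) := fun x => (Int.natAbs_dvd).symm
  set G : ℤ → AnnTil → AnnTil := fun k z => tr (F z) k with hGdef
  have hGlift : ∀ k, IsLift f (G k) := by
    intro k
    constructor
    · show Continuous fun z => ((F z).1 + ((k:ℤ):ℝ), (F z).2)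
      exact ((continuous_fst.comp hFc).add continuous_const).prodMk (continuous_snd.comp hFc)
    · funext z
      show pr (tr (F z) k) = f (pr z)
      rw [pr_tr, hlift]
  have hw : ∀ k : ℤ, ∃ w, G k w = w := fun k => hfix (G k) (hGlift k)
  set w : ℤ → AnnTil := fun k => Classical.choose (hw k) with hwdef
  have hwfix : ∀ k, G k (w k) = w k := fun k => Classical.choose_spec (hw k)
  set p : ℤ → Ann := fun k => pr (w k) with hpdef
  have hpfix : ∀ k, f (p k) = p k := by
    intro k
    show f (pr (w k)) = pr (w k)
    conv_rhs => rw [← hwfix k]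
    show f (pr (w k)) = pr (tr (F (w k)) k)
    rw [pr_tr, hlift]
  have hequiv : ∀ (k j : ℤ) (u' v' : AnnTil), G k u' = u' → G j v' = v' →
      (d - 1) ∣ (j - k) → NielsenEquiv f (pr u') (pr v') := by
    intro k j u' v' hu' hv' hdv
    obtain ⟨m, hm⟩ := hdv
    have hfix2 : G k (tr v' m) = tr v' m := by
      show tr (F (tr v' m)) k = tr v' m
      rw [F_iter hFd m v']
      have hFv : F v' = tr v' (-j) := tr_shift hv'
      rw [tr_tr, hFv, tr_tr]
      congr 1
      linear_combination -hm
    have hne := nielsen_of_common_lift hf (hGlift k) hu' hfix2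
    rwa [pr_tr] at hne
  have hdvd : ∀ (k j : ℤ) (u' v' : AnnTil), G k u' = u' → G j v' = v' →
      NielsenEquiv f (pr u') (pr v') → (d - 1) ∣ (j - k) := by
    intro k j u' v' hu' hv' hne
    exact dvd_of_nielsen hf ⟨hFc, hFl⟩ hFd k j u' v' hu' hv' hne
  have key : ∀ i j : ℕ, i < N → j < N → ((N:ℤ) ∣ ((j:ℤ) - (i:ℤ))) → i = j := by
    intro i j hi hj hdv
    obtain ⟨c, hc⟩ := hdv
    have hlt : (j:ℤ) - (i:ℤ) < (N:ℤ) := by omega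
    have hgt : -(N:ℤ) < (j:ℤ) - (i:ℤ) := by omega
    rw [hc] at hlt hgt
    have hc1 : c < 1 := lt_of_mul_lt_mul_left (by rwa [mul_one] : (N:ℤ)*c < (N:ℤ)*1) hNZ.le
    have hc2 : -1 < c := lt_of_mul_lt_mul_left
      (by rw [mul_neg_one]; omega : (N:ℤ)*(-1) < (N:ℤ)*c) hNZ.le
    have hc0 : c = 0 := by omega
    rw [hc0, mul_zero] at hc
    omega
  refine ⟨(Finset.range N).image (fun i : ℕ => p (i:ℤ)), ?_, ?_, ?_, ?_⟩
  · rw [Finset.card_image_of_injOn, Finset.card_range]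
    intro i hi j hj hij
    simp only [Finset.coe_range, Set.mem_Iio] at hi hj
    have hij' : p (i:ℤ) = p (j:ℤ) := hij
    have hrefl : NielsenEquiv f (p (i:ℤ)) (p (i:ℤ)) :=
      hequiv i i (w i) (w i) (hwfix i) (hwfix i) (by simp)
    nth_rewrite 2 [hij'] at hrefl
    have hdd := hdvd i j (w i) (w j) (hwfix i) (hwfix j) hrefl
    exact key i j hi hj ((hdvdN _).mp hdd)
  · intro q hq
    simp only [Finset.mem_image, Finset.mem_range] at hq
    obtain ⟨i, hi, rfl⟩ := hq
    exact hpfix i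
  · intro a ha b hb hab hne
    simp only [Finset.mem_image, Finset.mem_range] at ha hb
    obtain ⟨i, hi, rfl⟩ := ha
    obtain ⟨j, hj, rfl⟩ := hb
    have hdd := hdvd i j (w i) (w j) (hwfix i) (hwfix j) hne
    exact hab (by rw [key i j hi hj ((hdvdN _).mp hdd)])
  · intro q hq
    set w0 : AnnTil := (alift q.1, q.2) with hw0def
    have hprw0 : pr w0 = q := by
      rw [pr_def]
      exact Prod.ext_iff.mpr ⟨ee_alift q.1, rfl⟩
    have hpr2 : pr (F w0) = pr w0 := by rw [hlift, hprw0, hq]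
    obtain ⟨m, hm⟩ := pr_eq_iff.mp hpr2
    have hGfix : G (-m) w0 = w0 := by
      show tr (F w0) (-m) = w0
      rw [hm, tr_tr, show m + -m = 0 from by omega, tr_zero]
    set k : ℤ := -m with hkdef
    set r : ℕ := (k % (N:ℤ)).toNat with hrdef
    have hmod1 : 0 ≤ k % (N:ℤ) := Int.emod_nonneg k (by omega)
    have hmod2 : k % (N:ℤ) < (N:ℤ) := Int.emod_lt_of_pos k hNZ
    have hrcast : (r:ℤ) = k % (N:ℤ) := Int.toNat_of_nonneg hmod1
    have hrlt : r < N := by omega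
    have hdv : (d - 1) ∣ ((r:ℤ) - k) := by
      rw [hdvdN]
      refine ⟨-(k / (N:ℤ)), ?_⟩
      have h := Int.mul_ediv_add_emod k (N:ℤ)
      linear_combination hrcast + h
    have hne := hequiv k r w0 (w r) hGfix (hwfix r) hdv
    rw [hprw0] at hne
    exact ⟨p (r:ℤ), Finset.mem_image.mpr ⟨r, Finset.mem_range.mpr hrlt, rfl⟩, hne⟩
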